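/- Fix X ∈ ℝ^{n×p} and suppose f is differentiable at the point X·A(X) with Frobenius gradient G₀ := ∇f(X·A(X)). Then h is differentiable at X and its Frobenius gradient is ∇h(X) = G₀·A(X) − X·Φ(Xᵀ·G₀) + β·X·(XᵀX − I_p). In particular, if X ∈ S_{n,p} then ∇h(X) = ∇f(X) − X·Φ(Xᵀ∇f(X)) = grad f(X). -/

import Mathlib

open Matrix

attribute [local instance] Matrix.frobeniusNormedAddCommGroup Matrix.frobeniusNormedSpace

namespace ExPen

noncomputable def finner {n p : ℕ} (A B : Matrix (Fin n) (Fin p) ℝ) : ℝ := (Aᵀ * B).trace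

noncomputable def Phi {p : ℕ} (M : Matrix (Fin p) (Fin p) ℝ) : Matrix (Fin p) (Fin p) ℝ :=
  (1 / 2 : ℝ) • (M + Mᵀ)

noncomputable def Amap {n p : ℕ} (X : Matrix (Fin n) (Fin p) ℝ) : Matrix (Fin p) (Fin p) ℝ :=
  (3 / 2 : ℝ) • (1 : Matrix (Fin p) (Fin p) ℝ) - (1 / 2 : ℝ) • (Xᵀ * X)

noncomputable def g {n p : ℕ} (f : Matrix (Fin n) (Fin p) ℝ → ℝ)
    (X : Matrix (Fin n) (Fin p) ℝ) : ℝ := f (X * Amap X)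

noncomputable def hpen {n p : ℕ} (f : Matrix (Fin n) (Fin p) ℝ → ℝ) (β : ℝ)
    (X : Matrix (Fin n) (Fin p) ℝ) : ℝ := g f X + β / 4 * ‖Xᵀ * X - 1‖ ^ 2

noncomputable def dualCLM {n p : ℕ} (G : Matrix (Fin n) (Fin p) ℝ) :
    Matrix (Fin n) (Fin p) ℝ →L[ℝ] ℝ :=
  LinearMap.toContinuousLinearMap
    { toFun := fun D => (Gᵀ * D).trace
      map_add' := by intro D E; simp [Matrix.mul_add]
      map_smul' := by intro c D; simp [Matrix.mul_smul] }

def HasGradAt {n p : ℕ} (φ : Matrix (Fin n) (Fin p) ℝ → ℝ)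
    (X G : Matrix (Fin n) (Fin p) ℝ) : Prop :=
  HasFDerivAt φ (dualCLM G) X

noncomputable def specNorm {n p : ℕ} (X : Matrix (Fin n) (Fin p) ℝ) : ℝ :=
  ‖LinearMap.toContinuousLinearMap
    (Matrix.toEuclideanLin X : EuclideanSpace ℝ (Fin p) →ₗ[ℝ] EuclideanSpace ℝ (Fin n))‖

lemma posSemidef_tmul {n p : ℕ} (X : Matrix (Fin n) (Fin p) ℝ) : (Xᵀ * X).PosSemidef := by
  simpa [Matrix.conjTranspose_eq_transpose_of_trivial] using
    Matrix.posSemidef_conjTranspose_mul_self X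

noncomputable def Pst {n p : ℕ} (X : Matrix (Fin n) (Fin p) ℝ) : Matrix (Fin n) (Fin p) ℝ :=
  X * (((posSemidef_tmul X).1.eigenvectorUnitary.1 *
    diagonal ((RCLike.ofReal : ℝ → ℝ) ∘ (√·) ∘ (posSemidef_tmul X).1.eigenvalues) *
    (star (posSemidef_tmul X).1.eigenvectorUnitary : Matrix (Fin p) (Fin p) ℝ) :
      Matrix (Fin p) (Fin p) ℝ))⁻¹


noncomputable def mulCLM (a b c : ℕ) :
    Matrix (Fin a) (Fin b) ℝ →L[ℝ] Matrix (Fin b) (Fin c) ℝ →L[ℝ] Matrix (Fin a) (Fin c) ℝ :=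
  LinearMap.toContinuousLinearMap
    { toFun := fun A => LinearMap.toContinuousLinearMap
        { toFun := fun B => A * B
          map_add' := fun B C => Matrix.mul_add A B C
          map_smul' := fun r B => (Matrix.mul_smul A r B) }
      map_add' := fun A B => by ext C : 1; simp [Matrix.add_mul]
      map_smul' := fun r A => by ext C : 1; simp [Matrix.smul_mul] }

@[simp] lemma mulCLM_apply {a b c : ℕ} (A : Matrix (Fin a) (Fin b) ℝ)
    (B : Matrix (Fin b) (Fin c) ℝ) : mulCLM a b c A B = A * B := rfl

noncomputable def transposeCLM (a b : ℕ) :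
    Matrix (Fin a) (Fin b) ℝ →L[ℝ] Matrix (Fin b) (Fin a) ℝ :=
  LinearMap.toContinuousLinearMap
    { toFun := fun A => Aᵀ
      map_add' := fun A B => Matrix.transpose_add A B
      map_smul' := fun r A => Matrix.transpose_smul r A }

@[simp] lemma transposeCLM_apply {a b : ℕ} (A : Matrix (Fin a) (Fin b) ℝ) :
    transposeCLM a b A = Aᵀ := rfl

noncomputable def traceCLM (a : ℕ) : Matrix (Fin a) (Fin a) ℝ →L[ℝ] ℝ :=
  LinearMap.toContinuousLinearMap
    { toFun := fun A => A.trace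
      map_add' := fun A B => Matrix.trace_add A B
      map_smul' := fun r A => Matrix.trace_smul r A }

@[simp] lemma traceCLM_apply {a : ℕ} (A : Matrix (Fin a) (Fin a) ℝ) :
    traceCLM a A = A.trace := rfl

@[simp] lemma dualCLM_apply {n p : ℕ} (G D : Matrix (Fin n) (Fin p) ℝ) :
    dualCLM G D = (Gᵀ * D).trace := rfl

lemma norm_sq_eq_trace {a b : ℕ} (M : Matrix (Fin a) (Fin b) ℝ) :
    ‖M‖ ^ 2 = (Mᵀ * M).trace := by
  have h : ‖M‖ = Real.sqrt (∑ i, ∑ j, (M i j) ^ 2) := by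
    rw [Matrix.frobenius_norm_def, Real.sqrt_eq_rpow]
    congr 1
    refine Finset.sum_congr rfl fun i _ => Finset.sum_congr rfl fun j _ => ?_
    rw [show ((2:ℝ)) = ((2:ℕ):ℝ) by norm_num, Real.rpow_natCast]
    simp [Real.norm_eq_abs, sq_abs]
  rw [h, Real.sq_sqrt (by positivity)]
  simp [Matrix.trace, Matrix.diag, Matrix.mul_apply, sq]
  rw [Finset.sum_comm]

theorem statement_1 {n p : ℕ} (f : Matrix (Fin n) (Fin p) ℝ → ℝ) (β : ℝ)
    (X G₀ : Matrix (Fin n) (Fin p) ℝ)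
    (hf : HasGradAt f (X * Amap X) G₀) :
    HasGradAt (hpen f β) X
      (G₀ * Amap X - X * Phi (Xᵀ * G₀) + β • (X * (Xᵀ * X - 1))) ∧
    (Xᵀ * X = 1 →
      G₀ * Amap X - X * Phi (Xᵀ * G₀) + β • (X * (Xᵀ * X - 1))
        = G₀ - X * Phi (Xᵀ * G₀)) := by
  constructor
  · have hT : HasFDerivAt (fun Y : Matrix (Fin n) (Fin p) ℝ => Yᵀ) (transposeCLM n p) X :=
      (transposeCLM n p).hasFDerivAt
    have hId : HasFDerivAt (fun Y : Matrix (Fin n) (Fin p) ℝ => Y)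
        (ContinuousLinearMap.id ℝ _) X := hasFDerivAt_id X
    set Kd : Matrix (Fin n) (Fin p) ℝ →L[ℝ] Matrix (Fin p) (Fin p) ℝ :=
      (mulCLM p n p).precompR _ Xᵀ (ContinuousLinearMap.id ℝ _) +
        (mulCLM p n p).precompL _ (transposeCLM n p) X with hKd
    have hTT : HasFDerivAt (fun Y : Matrix (Fin n) (Fin p) ℝ => Yᵀ * Y) Kd X := by
      have := (mulCLM p n p).hasFDerivAt_of_bilinear hT hId
      exact this
    have hA : HasFDerivAt (fun Y : Matrix (Fin n) (Fin p) ℝ => Amap Y)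
        (-((1 / 2 : ℝ) • Kd)) X := by
      have := (hTT.const_smul ((1 / 2 : ℝ))).const_sub
        ((3 / 2 : ℝ) • (1 : Matrix (Fin p) (Fin p) ℝ))
      simp only [Amap] at this ⊢
      exact this
    set μ' : Matrix (Fin n) (Fin p) ℝ →L[ℝ] Matrix (Fin n) (Fin p) ℝ :=
      (mulCLM n p p).precompR _ X (-((1 / 2 : ℝ) • Kd)) +
        (mulCLM n p p).precompL _ (ContinuousLinearMap.id ℝ _) (Amap X) with hμ'
    have hμ : HasFDerivAt (fun Y : Matrix (Fin n) (Fin p) ℝ => Y * Amap Y) μ' X := by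
      have := (mulCLM n p p).hasFDerivAt_of_bilinear hId hA
      exact this
    have hf' : HasFDerivAt f (dualCLM G₀) (X * Amap X) := hf
    have hg : HasFDerivAt (g f) ((dualCLM G₀).comp μ') X := hf'.comp X hμ
    have hS : HasFDerivAt (fun Y : Matrix (Fin n) (Fin p) ℝ => Yᵀ * Y - 1) Kd X :=
      hTT.sub_const 1
    have hST : HasFDerivAt (fun Y : Matrix (Fin n) (Fin p) ℝ => (Yᵀ * Y - 1)ᵀ)
        ((transposeCLM p p).comp Kd) X := (transposeCLM p p).hasFDerivAt.comp X hS
    set q' : Matrix (Fin n) (Fin p) ℝ →L[ℝ] ℝ :=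
      (traceCLM p).comp ((mulCLM p p p).precompR _ (Xᵀ * X - 1)ᵀ Kd) +
        (traceCLM p).comp
          ((mulCLM p p p).precompL _ ((transposeCLM p p).comp Kd) (Xᵀ * X - 1)) with hq'
    have hq0 : HasFDerivAt
        (fun Y : Matrix (Fin n) (Fin p) ℝ => ((Yᵀ * Y - 1)ᵀ * (Yᵀ * Y - 1)).trace) q' X := by
      have := (mulCLM p p p).hasFDerivAt_of_bilinear hST hS
      have h2 := (traceCLM p).hasFDerivAt.comp X this
      refine h2.congr_fderiv ?_
      rw [hq']
      refine ContinuousLinearMap.ext fun D => ?_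
      change ((Xᵀ * X - 1)ᵀ * Kd D + (Kd D)ᵀ * (Xᵀ * X - 1)).trace
        = ((Xᵀ * X - 1)ᵀ * Kd D).trace + ((Kd D)ᵀ * (Xᵀ * X - 1)).trace
      exact Matrix.trace_add _ _
    have hq : HasFDerivAt (fun Y : Matrix (Fin n) (Fin p) ℝ => β / 4 * ‖Yᵀ * Y - 1‖ ^ 2)
        ((β / 4) • q') X := by
      have heq : (fun Y : Matrix (Fin n) (Fin p) ℝ => β / 4 * ‖Yᵀ * Y - 1‖ ^ 2)
          = fun Y => β / 4 * ((Yᵀ * Y - 1)ᵀ * (Yᵀ * Y - 1)).trace := by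
        funext Y; rw [norm_sq_eq_trace]
      rw [heq]
      exact hq0.const_mul _
    have htot : HasFDerivAt (hpen f β) ((dualCLM G₀).comp μ' + (β / 4) • q') X := hg.add hq
    refine htot.congr_fderiv ?_
    refine ContinuousLinearMap.ext fun D => ?_
    change (G₀ᵀ * (X * (-((1 / 2 : ℝ) • (Xᵀ * D + Dᵀ * X))) + D * Amap X)).trace
        + (β / 4) * (((Xᵀ * X - 1)ᵀ * (Xᵀ * D + Dᵀ * X)).trace
          + ((Xᵀ * D + Dᵀ * X)ᵀ * (Xᵀ * X - 1)).trace)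
      = ((G₀ * Amap X - X * Phi (Xᵀ * G₀) + β • (X * (Xᵀ * X - 1)))ᵀ * D).trace
    simp only [Amap, Phi, Matrix.transpose_sub, Matrix.transpose_add, Matrix.transpose_smul,
      Matrix.transpose_mul, Matrix.transpose_transpose, Matrix.transpose_one,
      Matrix.mul_add, Matrix.add_mul, Matrix.mul_sub, Matrix.sub_mul,
      Matrix.mul_smul, Matrix.smul_mul, Matrix.mul_one, Matrix.one_mul,
      Matrix.mul_neg, Matrix.neg_mul, smul_add, smul_sub, smul_smul, neg_smul, smul_neg,
      Matrix.trace_add, Matrix.trace_sub, Matrix.trace_smul, Matrix.trace_neg,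
      Matrix.mul_assoc, smul_eq_mul]
    have c1 : (G₀ᵀ * (D * (Xᵀ * X))).trace = (Xᵀ * (X * (G₀ᵀ * D))).trace := by
      rw [← Matrix.mul_assoc G₀ᵀ D (Xᵀ * X), Matrix.trace_mul_comm, Matrix.mul_assoc]
    have c2 : (G₀ᵀ * (X * (Dᵀ * X))).trace = (Xᵀ * (G₀ * (Xᵀ * D))).trace := by
      rw [← Matrix.trace_transpose (G₀ᵀ * (X * (Dᵀ * X)))]
      simp only [Matrix.transpose_mul, Matrix.transpose_transpose, Matrix.mul_assoc]
      rw [← Matrix.mul_assoc Xᵀ D (Xᵀ * G₀), Matrix.trace_mul_comm, Matrix.mul_assoc]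
    have c3 : (Dᵀ * X).trace = (Xᵀ * D).trace := by
      rw [← Matrix.trace_transpose (Dᵀ * X), Matrix.transpose_mul, Matrix.transpose_transpose]
    have c4 : (Xᵀ * (X * (Dᵀ * X))).trace = (Xᵀ * (X * (Xᵀ * D))).trace := by
      rw [← Matrix.trace_transpose (Xᵀ * (X * (Dᵀ * X)))]
      simp only [Matrix.transpose_mul, Matrix.transpose_transpose, Matrix.mul_assoc]
      rw [← Matrix.mul_assoc Xᵀ D (Xᵀ * X), Matrix.trace_mul_comm, Matrix.mul_assoc]
    have c5 : (Dᵀ * (X * (Xᵀ * X))).trace = (Xᵀ * (X * (Xᵀ * D))).trace := by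
      rw [← Matrix.trace_transpose (Dᵀ * (X * (Xᵀ * X)))]
      simp only [Matrix.transpose_mul, Matrix.transpose_transpose, Matrix.mul_assoc]
    have c6 : (Xᵀ * (D * (Xᵀ * X))).trace = (Xᵀ * (X * (Xᵀ * D))).trace := by
      rw [← Matrix.mul_assoc Xᵀ D (Xᵀ * X), Matrix.trace_mul_comm, Matrix.mul_assoc]
    rw [c1, c2, c3, c4, c5, c6]
    ring
  · intro hX
    have h1 : Amap X = 1 := by rw [Amap, hX, ← sub_smul]; norm_num
    rw [h1, hX]
    simp
end ExPen
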